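/- Let μ ∈ (1/2, 1) and x, y > 0 satisfy √(y/x) ≤ ((1−μ)/μ)·(1+(√x+√y)²). Set a₁ = ((2−μ)/μ)·x, b₁ = ((1−μ)/μ)·√(x/y)·(1+x+y), c₁ = 1+x, t = (−b₁ + √(b₁² + 4a₁c₁)) / (2a₁), α* = t², and g(α) = (1−μ)·log₂(1+(1−α)x) + μ·log₂(1+x+y+2√(αxy)) for α ∈ [0,1]. Then α* ∈ (0,1] and g(α) ≤ g(α*) for all α ∈ [0,1]. -/

import Mathlib

set_option maxHeartbeats 1000000

/-- Tangent-line comparison for a weighted sum of two base-2 logarithms. -/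
lemma mode3_tangent_aux (μ A B A' B' : ℝ) (hμ0 : 0 < μ) (hμ1 : μ < 1)
    (hA : 0 < A) (hB : 0 < B) (hA' : 0 < A') (hB' : 0 < B')
    (hkey : (1 - μ) * (A - A') * B' + μ * (B - B') * A' ≤ 0) :
    (1 - μ) * Real.logb 2 A + μ * Real.logb 2 B
      ≤ (1 - μ) * Real.logb 2 A' + μ * Real.logb 2 B' := by
  have hL : 0 < Real.log 2 := Real.log_pos one_lt_two
  have h1μ : 0 ≤ 1 - μ := by linarith
  have hlogA : Real.log A - Real.log A' ≤ (A - A') / A' := by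
    have h := Real.log_le_sub_one_of_pos (div_pos hA hA')
    rw [Real.log_div (ne_of_gt hA) (ne_of_gt hA')] at h
    have he : A / A' - 1 = (A - A') / A' := by field_simp
    linarith
  have hlogB : Real.log B - Real.log B' ≤ (B - B') / B' := by
    have h := Real.log_le_sub_one_of_pos (div_pos hB hB')
    rw [Real.log_div (ne_of_gt hB) (ne_of_gt hB')] at h
    have he : B / B' - 1 = (B - B') / B' := by field_simp
    linarith
  have halg : (1 - μ) * ((A - A') / A') + μ * ((B - B') / B') ≤ 0 := by
    have h1 : (1 - μ) * ((A - A') / A') + μ * ((B - B') / B')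
        = ((1 - μ) * (A - A') * B' + μ * (B - B') * A') / (A' * B') := by
      field_simp
    rw [h1]
    exact div_nonpos_of_nonpos_of_nonneg hkey (by positivity)
  have hsum : (1 - μ) * Real.log A + μ * Real.log B
      ≤ (1 - μ) * Real.log A' + μ * Real.log B' := by
    linarith [mul_le_mul_of_nonneg_left hlogA h1μ,
      mul_le_mul_of_nonneg_left hlogB hμ0.le, halg]
  have hform : ∀ p q : ℝ, (1 - μ) * Real.logb 2 p + μ * Real.logb 2 q
      = ((1 - μ) * Real.log p + μ * Real.log q) / Real.log 2 := by
    intro p q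
    simp only [Real.logb]
    ring
  rw [hform, hform]
  exact div_le_div_of_nonneg_right hsum hL.le

/-- On the fading region `K₃` (condition `√(y/x) ≤ ((1−μ)/μ)(1+(√x+√y)²)`),
the power fraction `α* = t²` with `t = (−b₁+√(b₁²+4a₁c₁))/(2a₁)` lies in
`(0,1]` and maximizes over `[0,1]` the mode-3 Lagrangian objective at `β = 1`,
`g(α) = (1−μ)·log₂(1+(1−α)x) + μ·log₂(1+x+y+2√(αxy))`. -/
theorem mode3_K3_optimal_power_sharing
    (μ x y : ℝ) (hμ : μ ∈ Set.Ioo (1/2 : ℝ) 1) (hx : 0 < x) (hy : 0 < y)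
    (hcond : Real.sqrt (y / x)
      ≤ (1 - μ) / μ * (1 + (Real.sqrt x + Real.sqrt y) ^ 2)) :
    let a₁ : ℝ := (2 - μ) / μ * x
    let b₁ : ℝ := (1 - μ) / μ * Real.sqrt (x / y) * (1 + x + y)
    let c₁ : ℝ := 1 + x
    let t : ℝ := (-b₁ + Real.sqrt (b₁ ^ 2 + 4 * a₁ * c₁)) / (2 * a₁)
    let αstar : ℝ := t ^ 2
    αstar ∈ Set.Ioc (0:ℝ) 1 ∧
      ∀ α ∈ Set.Icc (0:ℝ) 1,
        (1 - μ) * Real.logb 2 (1 + (1 - α) * x)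
            + μ * Real.logb 2 (1 + x + y + 2 * Real.sqrt (α * x * y))
          ≤ (1 - μ) * Real.logb 2 (1 + (1 - αstar) * x)
            + μ * Real.logb 2 (1 + x + y + 2 * Real.sqrt (αstar * x * y)) := by
  obtain ⟨h12, hμ1⟩ := hμ
  have hμ0 : 0 < μ := by linarith
  have h1μ : 0 < 1 - μ := by linarith
  have h2μ : 0 < 2 - μ := by linarith
  have hu0 : 0 < Real.sqrt x := Real.sqrt_pos.2 hx
  have hv0 : 0 < Real.sqrt y := Real.sqrt_pos.2 hy
  intro a₁ b₁ c₁ t αstar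
  have hαs : αstar = t ^ 2 := rfl
  have htdef : t = (-b₁ + Real.sqrt (b₁ ^ 2 + 4 * a₁ * c₁)) / (2 * a₁) := rfl
  have hadef : a₁ = (2 - μ) / μ * x := rfl
  have hbdef : b₁ = (1 - μ) / μ * Real.sqrt (x / y) * (1 + x + y) := rfl
  have hcdef : c₁ = 1 + x := rfl
  clear_value αstar
  clear_value t
  clear_value a₁ b₁ c₁
  set u := Real.sqrt x with hu
  set v := Real.sqrt y with hv
  have hu2 : u ^ 2 = x := Real.sq_sqrt hx.le
  have hv2 : v ^ 2 = y := Real.sq_sqrt hy.le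
  have hsxy : Real.sqrt (x / y) = u / v := Real.sqrt_div hx.le y
  have hsyx : Real.sqrt (y / x) = v / u := Real.sqrt_div hy.le x
  rw [hsxy] at hbdef
  have ha₁ : 0 < a₁ := by rw [hadef]; positivity
  have hb₁ : 0 < b₁ := by rw [hbdef]; positivity
  have hc₁ : 0 < c₁ := by rw [hcdef]; positivity
  set D := Real.sqrt (b₁ ^ 2 + 4 * a₁ * c₁) with hDdef
  have hD0 : 0 ≤ D := Real.sqrt_nonneg _
  have hD2 : D ^ 2 = b₁ ^ 2 + 4 * a₁ * c₁ := Real.sq_sqrt (by positivity)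
  have hDb : b₁ < D := by
    have h1 : b₁ ^ 2 < D ^ 2 := by
      rw [hD2]
      linarith [mul_pos ha₁ hc₁]
    exact lt_of_pow_lt_pow_left₀ 2 hD0 h1
  have ht0 : 0 < t := by
    rw [htdef]
    apply div_pos (by linarith) (by linarith)
  have hkey : 2 * a₁ * t = D - b₁ := by
    rw [htdef]
    field_simp
    ring
  have hquad : a₁ * t ^ 2 + b₁ * t = c₁ := by
    have h4 : 4 * a₁ * (a₁ * t ^ 2 + b₁ * t) = 4 * a₁ * c₁ := by
      linear_combination (2 * a₁ * t + D + b₁) * hkey + hD2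
    exact mul_left_cancel₀ (by positivity) h4
  -- cleared-denominator form of the quadratic equation
  have hquad' : (2 - μ) * x * v * t ^ 2 + (1 - μ) * u * (1 + x + y) * t
      = μ * v * (1 + x) := by
    have h := hquad
    rw [hadef, hbdef, hcdef] at h
    have hμ' : μ ≠ 0 := ne_of_gt hμ0
    have hv' : v ≠ 0 := ne_of_gt hv0
    field_simp at h
    have h2 : μ * ((2 - μ) * x * v * t ^ 2 + (1 - μ) * u * (1 + x + y) * t)
        = μ * (μ * v * (1 + x)) := by linear_combination μ * h
    exact mul_left_cancel₀ hμ' h2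
  -- t ≤ 1 from the region condition
  have hcond' : v * μ ≤ (1 - μ) * (1 + (x + 2 * (u * v) + y)) * u := by
    rw [hsyx, div_le_iff₀ hu0, div_mul_eq_mul_div, div_mul_eq_mul_div,
      le_div_iff₀ hμ0, show (u + v) ^ 2 = x + 2 * (u * v) + y by
        rw [← hu2, ← hv2]; ring] at hcond
    exact hcond
  have hq1 : c₁ ≤ a₁ + b₁ := by
    rw [hadef, hbdef, hcdef]
    rw [show (2 - μ) / μ * x + (1 - μ) / μ * (u / v) * (1 + x + y)
        = ((2 - μ) * x * v + (1 - μ) * u * (1 + x + y)) / (μ * v) by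
      field_simp]
    rw [le_div_iff₀ (by positivity)]
    linarith [hcond', show u ^ 2 * v = x * v by rw [hu2],
      show μ * (u ^ 2 * v) = μ * (x * v) by rw [hu2]]
  have ht1 : t ≤ 1 := by
    by_contra h
    push_neg at h
    have h2 : (0:ℝ) < t ^ 2 - 1 := by
      have := one_lt_pow₀ h two_ne_zero
      linarith
    linarith [mul_pos ha₁ h2, mul_pos hb₁ (show (0:ℝ) < t - 1 by linarith)]
  have ht2 : t ^ 2 ≤ 1 := by
    have : t ^ 2 ≤ 1 := pow_le_one₀ ht0.le ht1
    linarith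
  -- positivity of the optimal operands
  have hAstar : (0:ℝ) < 1 + (1 - t ^ 2) * x := by
    have := mul_nonneg (show (0:ℝ) ≤ 1 - t ^ 2 by linarith) hx.le
    linarith
  have hBstar : (0:ℝ) < 1 + x + y + 2 * (t * (u * v)) := by positivity
  -- stationarity identity
  have hstat : (1 - μ) * x * t * (1 + x + y + 2 * (t * (u * v)))
      = μ * (u * v) * (1 + (1 - t ^ 2) * x) := by
    linear_combination u * hquad' - (1 - μ) * (1 + x + y) * t * hu2
  constructor
  · rw [hαs]
    exact ⟨by positivity, ht2⟩
  · intro α hα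
    obtain ⟨hα0, hα1⟩ := hα
    set s := Real.sqrt α with hsdef
    have hs0 : 0 ≤ s := Real.sqrt_nonneg _
    have hs2 : s ^ 2 = α := Real.sq_sqrt hα0
    have hsqα : Real.sqrt (α * x * y) = s * (u * v) := by
      rw [show α * x * y = α * (x * y) by ring, Real.sqrt_mul hα0,
        Real.sqrt_mul hx.le]
    have hsqt : Real.sqrt (αstar * x * y) = t * (u * v) := by
      rw [hαs, show t ^ 2 * x * y = t ^ 2 * (x * y) by ring,
        Real.sqrt_mul (sq_nonneg t), Real.sqrt_sq ht0.le, Real.sqrt_mul hx.le]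
    rw [hsqα, hsqt, hαs, ← hs2]
    have hA : (0:ℝ) < 1 + (1 - s ^ 2) * x := by
      have h1 : (0:ℝ) ≤ 1 - s ^ 2 := by rw [hs2]; linarith
      have := mul_nonneg h1 hx.le
      linarith
    have hB : (0:ℝ) < 1 + x + y + 2 * (s * (u * v)) := by positivity
    apply mode3_tangent_aux μ _ _ _ _ hμ0 hμ1 hA hB hAstar hBstar
    have hnum : (1 - μ) * ((1 + (1 - s ^ 2) * x) - (1 + (1 - t ^ 2) * x))
          * (1 + x + y + 2 * (t * (u * v)))
        + μ * ((1 + x + y + 2 * (s * (u * v)))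
          - (1 + x + y + 2 * (t * (u * v)))) * (1 + (1 - t ^ 2) * x)
        = -((1 - μ) * x * (1 + x + y + 2 * (t * (u * v))) * (s - t) ^ 2) := by
      linear_combination 2 * (t - s) * hstat
    rw [hnum]
    have hfin : 0 ≤ (1 - μ) * x * (1 + x + y + 2 * (t * (u * v))) * (s - t) ^ 2 := by
      positivity
    linarith
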